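/- Let F be a filter and P a prime filter of a residuated lattice with F ⊆ P. Then D_F(P) = ⋂{Q | Q is a prime filter with F ⊆ Q ⊆ P}. -/
import Mathlib


universe u

class ResiduatedLattice (A : Type u) extends Lattice A, BoundedOrder A where
  mul : A → A → A
  himp : A → A → A
  mul_comm : ∀ x y : A, mul x y = mul y x
  mul_assoc : ∀ x y z : A, mul (mul x y) z = mul x (mul y z)
  mul_top : ∀ x : A, mul x ⊤ = x
  adjoint : ∀ x y z : A, mul x y ≤ z ↔ x ≤ himp y z

namespace RL

variable {A : Type u} [ResiduatedLattice A]

/-- A filter: a nonempty subset closed under the monoid operation `⊙` and closed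
under joins with arbitrary elements. -/
def IsFilter (F : Set A) : Prop :=
  F.Nonempty ∧ (∀ x ∈ F, ∀ y ∈ F, ResiduatedLattice.mul x y ∈ F) ∧
    (∀ x ∈ F, ∀ y : A, x ⊔ y ∈ F)

/-- A prime filter: a proper filter such that `x ⊔ y ∈ P` implies `x ∈ P` or `y ∈ P`. -/
def IsPrime (P : Set A) : Prop :=
  IsFilter P ∧ P ≠ Set.univ ∧ ∀ x y : A, x ⊔ y ∈ P → x ∈ P ∨ y ∈ P

/-- The filter generated by a subset `X`. -/
def Fgen (X : Set A) : Set A := ⋂₀ {G : Set A | IsFilter G ∧ X ⊆ G}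

/-- An `X`-minimal prime filter: a minimal element of the set of prime filters containing `X`. -/
def MinPrimeOver (X : Set A) (P : Set A) : Prop :=
  IsPrime P ∧ X ⊆ P ∧ ∀ Q : Set A, IsPrime Q → X ⊆ Q → Q ⊆ P → Q = P

/-- A minimal prime filter. -/
def MinPrime (P : Set A) : Prop :=
  IsPrime P ∧ ∀ Q : Set A, IsPrime Q → Q ⊆ P → Q = P

/-- The coannihilator of `X` belonging to `F`. -/
def coann (F : Set A) (X : Set A) : Set A := {a : A | ∀ x ∈ X, x ⊔ a ∈ F}

/-- `X^⊥ = {a | x ⊔ a = ⊤ for all x ∈ X}`. -/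
def perp (X : Set A) : Set A := {a : A | ∀ x ∈ X, x ⊔ a = ⊤}

/-- `D_F(P) = {a | (F : a) ⊄ P}`. -/
def DF (F P : Set A) : Set A := {a : A | ¬ coann F {a} ⊆ P}

/-- A `∨`-closed subset: nonempty and closed under joins. -/
def VClosed (C : Set A) : Prop := C.Nonempty ∧ ∀ x ∈ C, ∀ y ∈ C, x ⊔ y ∈ C

end RL

namespace RLAux

open ResiduatedLattice

variable {A : Type u} [ResiduatedLattice A]

local infixl:70 " ⊙ " => ResiduatedLattice.mul

private lemma mc (x y : A) : x ⊙ y = y ⊙ x := ResiduatedLattice.mul_comm x y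

lemma mul_le_mul_left {x x' : A} (h : x ≤ x') (y : A) : x ⊙ y ≤ x' ⊙ y := by
  have := (adjoint x' y (x' ⊙ y)).mp le_rfl
  exact (adjoint x y (x' ⊙ y)).mpr (le_trans h this)

lemma mul_le_mul_right (x : A) {y y' : A} (h : y ≤ y') : x ⊙ y ≤ x ⊙ y' := by
  rw [mc x y, mc x y']; exact mul_le_mul_left h x

lemma top_mul (x : A) : (⊤ : A) ⊙ x = x := by rw [mc]; exact mul_top x

lemma mul_le_left (x y : A) : x ⊙ y ≤ x := by
  have := mul_le_mul_right x (le_top (a := y)); rwa [mul_top] at this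

lemma mul_le_right (x y : A) : x ⊙ y ≤ y := by
  rw [mc]; exact mul_le_left y x

lemma mul_sup (x y z : A) : x ⊙ (y ⊔ z) = (x ⊙ y) ⊔ (x ⊙ z) := by
  apply le_antisymm
  · rw [mc x (y ⊔ z)]
    apply (adjoint (y ⊔ z) x _).mpr
    apply sup_le
    · exact (adjoint y x _).mp (by rw [mc]; exact le_sup_left)
    · exact (adjoint z x _).mp (by rw [mc]; exact le_sup_right)
  · exact sup_le (mul_le_mul_right x le_sup_left) (mul_le_mul_right x le_sup_right)

/-- power with `pw x 0 = ⊤` -/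
def pw (x : A) : ℕ → A
  | 0 => ⊤
  | n + 1 => pw x n ⊙ x

lemma pw_sup_le (x y : A) : ∀ n m : ℕ, pw (x ⊔ y) (n + m) ≤ pw x n ⊔ pw y m := by
  intro n
  induction n with
  | zero => intro m; exact le_trans le_top le_sup_left
  | succ n ihn =>
    intro m
    induction m with
    | zero => exact le_trans le_top le_sup_right
    | succ m ihm =>
      have hz : pw (x ⊔ y) (n + 1 + (m + 1)) = pw (x ⊔ y) (n + 1 + m) ⊙ (x ⊔ y) := rfl
      rw [hz, mul_sup]
      apply sup_le
      · calc pw (x ⊔ y) (n + 1 + m) ⊙ x ≤ (pw x n ⊔ pw y (m + 1)) ⊙ x := by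
              have : n + 1 + m = n + (m + 1) := by omega
              exact mul_le_mul_left (this ▸ ihn (m + 1)) x
          _ = (pw x n ⊙ x) ⊔ (pw y (m + 1) ⊙ x) := by
              rw [mc, mul_sup, mc x (pw x n), mc x (pw y (m+1))]
          _ ≤ pw x (n + 1) ⊔ pw y (m + 1) := sup_le_sup le_rfl (mul_le_left _ _)
      · calc pw (x ⊔ y) (n + 1 + m) ⊙ y ≤ (pw x (n + 1) ⊔ pw y m) ⊙ y :=
              mul_le_mul_left ihm y
          _ = (pw x (n + 1) ⊙ y) ⊔ (pw y m ⊙ y) := by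
              rw [mc, mul_sup, mc y (pw x (n+1)), mc y (pw y m)]
          _ ≤ pw x (n + 1) ⊔ pw y (m + 1) := sup_le_sup (mul_le_left _ _) le_rfl

lemma filter_upward {G : Set A} (hG : RL.IsFilter G) {x z : A} (hx : x ∈ G) (hxz : x ≤ z) :
    z ∈ G := by
  have := hG.2.2 x hx z
  rwa [sup_eq_right.mpr hxz] at this

lemma top_mem {G : Set A} (hG : RL.IsFilter G) : (⊤ : A) ∈ G := by
  obtain ⟨t, ht⟩ := hG.1
  exact filter_upward hG ht le_top

lemma pw_mem {G : Set A} (hG : RL.IsFilter G) {x : A} (hx : x ∈ G) (n : ℕ) : pw x n ∈ G := by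
  induction n with
  | zero => exact top_mem hG
  | succ n ih => exact hG.2.1 _ ih _ hx

/-- key separation lemma -/
lemma exists_prime_between (F P : Set A) (hF : RL.IsFilter F) (hP : RL.IsPrime P)
    (hFP : F ⊆ P) (a : A) (ha : RL.coann F {a} ⊆ P) :
    ∃ Q : Set A, RL.IsPrime Q ∧ F ⊆ Q ∧ Q ⊆ P ∧ a ∉ Q := by
  obtain ⟨c₀, hc₀⟩ : ∃ c, c ∉ P := by
    by_contra h
    push_neg at h
    exact hP.2.1 (Set.eq_univ_iff_forall.mpr h)
  -- the ∨-closed set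
  set S : Set A := {s | s ∉ P ∨ s = a ∨ ∃ c, c ∉ P ∧ s = a ⊔ c} with hS
  have haS : a ∈ S := Or.inr (Or.inl rfl)
  have hPcS : ∀ c, c ∉ P → c ∈ S := fun c hc => Or.inl hc
  have hSsup : ∀ s ∈ S, ∀ t ∈ S, s ⊔ t ∈ S := by
    rintro s hs t ht
    have hjoin : ∀ u v : A, u ∉ P → v ∉ P → u ⊔ v ∉ P := by
      intro u v hu hv huv
      rcases hP.2.2 u v huv with h | h
      · exact hu h
      · exact hv h
    rcases hs with hs | hs | ⟨c, hc, hs⟩ <;> rcases ht with ht | ht | ⟨d, hd, ht⟩ <;>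
      (try subst hs) <;> (try subst ht)
    · exact Or.inl (hjoin s t hs ht)
    · exact Or.inr (Or.inr ⟨s, hs, by simp [sup_comm]⟩)
    · exact Or.inr (Or.inr ⟨s ⊔ d, hjoin s d hs hd, by simp [sup_comm, sup_assoc, sup_left_comm]⟩)
    · exact Or.inr (Or.inr ⟨t, ht, rfl⟩)
    · exact Or.inr (Or.inl (sup_idem _))
    · exact Or.inr (Or.inr ⟨d, hd, by simp [← sup_assoc]⟩)
    · exact Or.inr (Or.inr ⟨c ⊔ t, hjoin c t hc ht, by rw [sup_assoc]⟩)
    · exact Or.inr (Or.inr ⟨c, hc, by simp [sup_comm, sup_assoc, sup_left_comm]⟩)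
    · exact Or.inr (Or.inr ⟨c ⊔ d, hjoin c d hc hd, by simp [sup_comm, sup_assoc, sup_left_comm]⟩)
  -- F is disjoint from S
  have hFS : ∀ f ∈ F, f ∉ S := by
    rintro f hf (h | h | ⟨c, hc, h⟩)
    · exact h (hFP hf)
    · subst h
      apply hc₀
      apply ha
      intro x hx
      rcases hx with rfl
      exact hF.2.2 _ hf c₀
    · subst h
      apply hc
      apply ha
      intro x hx
      rcases hx with rfl
      exact hf
  -- Zorn
  set Fam : Set (Set A) := {G | RL.IsFilter G ∧ F ⊆ G ∧ ∀ z ∈ G, z ∉ S} with hFam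
  have hFmem : F ∈ Fam := ⟨hF, le_rfl, hFS⟩
  have hchaincond : ∀ c ⊆ Fam, IsChain (· ⊆ ·) c → c.Nonempty →
      ∃ ub ∈ Fam, ∀ s ∈ c, s ⊆ ub := by
    intro c hc hchain hcne
    refine ⟨⋃₀ c, ⟨⟨?_, ?_, ?_⟩, ?_, ?_⟩, fun s hs => Set.subset_sUnion_of_mem hs⟩
    · obtain ⟨G, hG⟩ := hcne
      obtain ⟨x, hx⟩ := (hc hG).1.1
      exact ⟨x, G, hG, hx⟩
    · rintro x ⟨G₁, hG₁, hx⟩ y ⟨G₂, hG₂, hy⟩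
      rcases hchain.total hG₁ hG₂ with h | h
      · exact ⟨G₂, hG₂, (hc hG₂).1.2.1 x (h hx) y hy⟩
      · exact ⟨G₁, hG₁, (hc hG₁).1.2.1 x hx y (h hy)⟩
    · rintro x ⟨G₁, hG₁, hx⟩ y
      exact ⟨G₁, hG₁, (hc hG₁).1.2.2 x hx y⟩
    · obtain ⟨G, hG⟩ := hcne
      exact (hc hG).2.1.trans (Set.subset_sUnion_of_mem hG)
    · rintro z ⟨G₁, hG₁, hz⟩
      exact (hc hG₁).2.2 z hz
  obtain ⟨M, hFM, hMmem, hMmax⟩ : ∃ M, F ⊆ M ∧ M ∈ Fam ∧ ∀ G ∈ Fam, M ⊆ G → G = M := by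
    obtain ⟨M, hFM, hMmax⟩ := zorn_subset_nonempty Fam hchaincond F hFmem
    exact ⟨M, hFM, hMmax.1, fun G hG hMG => (hMmax.2 hG hMG).antisymm hMG⟩
  obtain ⟨hMfil, hFM', hMS⟩ := hMmem
  -- M is prime
  have hMprime : RL.IsPrime M := by
    refine ⟨hMfil, ?_, ?_⟩
    · intro h
      exact hMS a (h ▸ Set.mem_univ a) haS
    · intro x y hxy
      by_contra h
      push_neg at h
      obtain ⟨hx, hy⟩ := h
      -- generated filters meet S
      have key : ∀ w : A, w ∉ M →
          ∃ s ∈ S, ∃ q ∈ M, ∃ n : ℕ, q ⊙ pw w n ≤ s := by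
        intro w hw
        set G : Set A := {z | ∃ q ∈ M, ∃ n : ℕ, q ⊙ pw w n ≤ z} with hGdef
        have hGfil : RL.IsFilter G := by
          refine ⟨⟨⊤, ⊤, top_mem hMfil, 0, le_top⟩, ?_, ?_⟩
          · rintro z₁ ⟨q₁, hq₁, n₁, h₁⟩ z₂ ⟨q₂, hq₂, n₂, h₂⟩
            refine ⟨q₁ ⊙ q₂, hMfil.2.1 _ hq₁ _ hq₂, n₁ + n₂, ?_⟩
            have e : (q₁ ⊙ q₂) ⊙ pw w (n₁ + n₂) = (q₁ ⊙ pw w n₁) ⊙ (q₂ ⊙ pw w n₂) := by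
              have hpw : ∀ k l : ℕ, pw w (k + l) = pw w k ⊙ pw w l := by
                intro k l
                induction l with
                | zero => simp [pw, mul_top]
                | succ l ih => show pw w (k + l) ⊙ w = _
                               rw [ih, ResiduatedLattice.mul_assoc]; rfl
              rw [hpw, ResiduatedLattice.mul_assoc, ← ResiduatedLattice.mul_assoc q₂ (pw w n₁) (pw w n₂),
                mc q₂ (pw w n₁), ResiduatedLattice.mul_assoc (pw w n₁) q₂ (pw w n₂), ← ResiduatedLattice.mul_assoc]
            rw [e]
            exact le_trans (mul_le_mul_left h₁ _) (mul_le_mul_right _ h₂)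
          · rintro z ⟨q, hq, n, hn⟩ y'
            exact ⟨q, hq, n, le_trans hn le_sup_left⟩
        have hMG : M ⊆ G := fun q hq => ⟨q, hq, 0, le_of_eq (mul_top q)⟩
        have hwG : w ∈ G := by
          obtain ⟨t, ht⟩ := hMfil.1
          refine ⟨t, ht, 1, ?_⟩
          calc t ⊙ pw w 1 ≤ ⊤ ⊙ pw w 1 := mul_le_mul_left le_top _
            _ = pw w 1 := top_mul _
            _ = ⊤ ⊙ w := rfl
            _ = w := top_mul w
        by_cases hGS : ∀ z ∈ G, z ∉ S
        · have : G = M := hMmax G ⟨hGfil, hFM'.trans hMG, hGS⟩ hMG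
          exact absurd (this ▸ hwG) hw
        · push_neg at hGS
          obtain ⟨s, ⟨q, hq, n, hn⟩, hsS⟩ := hGS
          exact ⟨s, hsS, q, hq, n, hn⟩
      obtain ⟨s₁, hs₁S, q₁, hq₁, n₁, h₁⟩ := key x hx
      obtain ⟨s₂, hs₂S, q₂, hq₂, n₂, h₂⟩ := key y hy
      have hq : q₁ ⊙ q₂ ∈ M := hMfil.2.1 _ hq₁ _ hq₂
      have hpwm : pw (x ⊔ y) (n₁ + n₂) ∈ M := pw_mem hMfil hxy _
      have ht : (q₁ ⊙ q₂) ⊙ pw (x ⊔ y) (n₁ + n₂) ∈ M := hMfil.2.1 _ hq _ hpwm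
      have hle : (q₁ ⊙ q₂) ⊙ pw (x ⊔ y) (n₁ + n₂) ≤ s₁ ⊔ s₂ := by
        calc (q₁ ⊙ q₂) ⊙ pw (x ⊔ y) (n₁ + n₂)
            ≤ (q₁ ⊙ q₂) ⊙ (pw x n₁ ⊔ pw y n₂) := mul_le_mul_right _ (pw_sup_le x y n₁ n₂)
          _ = ((q₁ ⊙ q₂) ⊙ pw x n₁) ⊔ ((q₁ ⊙ q₂) ⊙ pw y n₂) := mul_sup _ _ _
          _ ≤ (q₁ ⊙ pw x n₁) ⊔ (q₂ ⊙ pw y n₂) := by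
              apply sup_le_sup
              · exact mul_le_mul_left (mul_le_left q₁ q₂) _
              · exact mul_le_mul_left (mul_le_right q₁ q₂) _
          _ ≤ s₁ ⊔ s₂ := sup_le_sup h₁ h₂
      have : s₁ ⊔ s₂ ∈ M := filter_upward hMfil ht hle
      exact hMS _ this (hSsup _ hs₁S _ hs₂S)
  refine ⟨M, hMprime, hFM', ?_, fun haM => hMS a haM haS⟩
  intro z hz
  by_contra hzP
  exact hMS z hz (hPcS z hzP)

end RLAux


theorem DF_eq_sInter {A : Type u} [ResiduatedLattice A] (F P : Set A)
    (hF : RL.IsFilter F) (hP : RL.IsPrime P) (hFP : F ⊆ P) :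
    RL.DF F P = ⋂₀ {Q : Set A | RL.IsPrime Q ∧ F ⊆ Q ∧ Q ⊆ P} := by
  ext a
  simp only [RL.DF, Set.mem_setOf_eq, Set.mem_sInter]
  constructor
  · intro hna Q hQ
    obtain ⟨hQprime, hFQ, hQP⟩ := hQ
    rw [Set.not_subset] at hna
    obtain ⟨b, hb, hbP⟩ := hna
    have hab : a ⊔ b ∈ F := hb a rfl
    rcases hQprime.2.2 a b (hFQ hab) with h | h
    · exact h
    · exact absurd (hQP h) hbP
  · intro hall
    by_contra hna
    obtain ⟨Q, hQprime, hFQ, hQP, haQ⟩ :=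
      RLAux.exists_prime_between F P hF hP hFP a hna
    exact haQ (hall Q ⟨hQprime, hFQ, hQP⟩)
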